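/- Let $f \in A[X]$ be a nonzero polynomial whose lowest-degree term is $a_{n_0} X^{n_0}$ with $a_{n_0} \neq 0$. Then the element $\prod_{j=1}^{q^d} f(\beta_j)$ of $A[[u]]$ has coefficient of $u^n$ equal to $0$ for all $n < n_0$, and its coefficient of $u^{n_0}$ equals $a_{n_0}^{q^d}$. -/

import Mathlib

namespace ProdRootsAux

open Polynomial

/-- Evaluation of an elementary symmetric `MvPolynomial` via `eval₂Hom`. -/
lemma eval₂Hom_esymm {A L : Type*} [CommRing A] [CommRing L] {σ : Type*} [Fintype σ]
    [DecidableEq σ] (f : A →+* L) (v : σ → L) (k : ℕ) :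
    MvPolynomial.eval₂Hom f v (MvPolynomial.esymm σ A k) =
      (Finset.univ.val.map v).esymm k := by
  simp_rw [MvPolynomial.esymm, map_sum, map_prod, MvPolynomial.eval₂Hom_X',
    Finset.esymm_map_val]

/-- Core symmetric-function lemma: a product `∏ h(βⱼ)` over the roots, where the
elementary symmetric values of the `βⱼ` are `toL` of power series with zero constant
coefficient, comes from a power series with constant coefficient `(h.coeff 0)^N`. -/
lemma core {A L : Type*} [CommRing A] [Field L] (N : ℕ)
    (toL : PowerSeries A →+* L) (β : Fin N → L)
    (ε : Fin N → PowerSeries A)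
    (hε0 : ∀ i, PowerSeries.constantCoeff (R := A) (ε i) = 0)
    (hεβ : ∀ i : Fin N, toL (ε i) = (Finset.univ.val.map β).esymm ((i : ℕ) + 1))
    (h : Polynomial A) :
    ∃ g : PowerSeries A,
      toL g = ∏ j, Polynomial.eval (β j) (h.map (toL.comp (PowerSeries.C (R := A)))) ∧
      PowerSeries.constantCoeff (R := A) g = (h.coeff 0) ^ N := by
  classical
  set Q : MvPolynomial (Fin N) A := ∏ j, Polynomial.aeval (MvPolynomial.X j) h with hQ
  have hQsym : Q.IsSymmetric := by
    intro e
    calc (MvPolynomial.rename e) Q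
        = ∏ j, (MvPolynomial.rename e) (Polynomial.aeval (MvPolynomial.X j) h) := by
          rw [hQ, map_prod]
      _ = ∏ j, Polynomial.aeval (MvPolynomial.X (e j)) h := by
          refine Finset.prod_congr rfl fun j _ => ?_
          rw [← Polynomial.aeval_algHom_apply, MvPolynomial.rename_X]
      _ = Q := Equiv.prod_comp e (fun j => Polynomial.aeval (MvPolynomial.X j) h)
  obtain ⟨Φ, hΦ⟩ := MvPolynomial.esymmAlgHom_surjective (σ := Fin N) (n := N) A
    (by simp) ⟨Q, (MvPolynomial.mem_symmetricSubalgebra _).mpr hQsym⟩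
  have hΦ' : MvPolynomial.aeval
      (fun i : Fin N => MvPolynomial.esymm (Fin N) A ((i : ℕ) + 1)) Φ = Q := by
    have := congrArg Subtype.val hΦ
    rwa [MvPolynomial.esymmAlgHom_apply] at this
  refine ⟨MvPolynomial.eval₂Hom (PowerSeries.C (R := A)) ε Φ, ?_, ?_⟩
  · -- image under toL is the product over the roots
    have h1 : toL (MvPolynomial.eval₂Hom (PowerSeries.C (R := A)) ε Φ)
        = MvPolynomial.eval₂ (toL.comp (PowerSeries.C (R := A))) (fun i => toL (ε i)) Φ :=
      MvPolynomial.eval₂_comp_left toL (PowerSeries.C (R := A)) ε Φ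
    have h2 : ∀ j, Polynomial.eval (β j) (h.map (toL.comp (PowerSeries.C (R := A)))) =
        MvPolynomial.eval₂Hom (toL.comp (PowerSeries.C (R := A))) β
          (Polynomial.aeval (MvPolynomial.X j) h) := by
      intro j
      rw [Polynomial.eval_map, Polynomial.aeval_def, Polynomial.hom_eval₂]
      congr 1
      · ext a
        simp [MvPolynomial.algebraMap_eq]
      · simp
    have h3 : (MvPolynomial.eval₂Hom (toL.comp (PowerSeries.C (R := A))) β) Q
        = MvPolynomial.eval₂ (toL.comp (PowerSeries.C (R := A))) (fun i => toL (ε i)) Φ := by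
      rw [← hΦ', MvPolynomial.aeval_def, MvPolynomial.algebraMap_eq,
        MvPolynomial.eval₂_comp_left (MvPolynomial.eval₂Hom (toL.comp (PowerSeries.C (R := A))) β)
          MvPolynomial.C _ Φ]
      have hc : ((MvPolynomial.eval₂Hom (toL.comp (PowerSeries.C (R := A))) β).comp
          (MvPolynomial.C (σ := Fin N) (R := A))) = toL.comp (PowerSeries.C (R := A)) := by
        ext a; simp
      have hv : (⇑(MvPolynomial.eval₂Hom (toL.comp (PowerSeries.C (R := A))) β)) ∘
          (fun i : Fin N => MvPolynomial.esymm (Fin N) A ((i : ℕ) + 1)) =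
          fun i => toL (ε i) := by
        funext i
        simp only [Function.comp_apply]
        rw [eval₂Hom_esymm, hεβ]
      rw [hc, hv]
    rw [h1, ← h3, hQ, map_prod]
    exact Finset.prod_congr rfl fun j _ => (h2 j).symm
  · -- constant coefficient
    have h1 : (PowerSeries.constantCoeff (R := A)) (MvPolynomial.eval₂Hom (PowerSeries.C (R := A)) ε Φ)
        = MvPolynomial.eval₂ (RingHom.id A) (fun _ => (0 : A)) Φ := by
      rw [MvPolynomial.coe_eval₂Hom,
        MvPolynomial.eval₂_comp_left (PowerSeries.constantCoeff (R := A)) (PowerSeries.C (R := A)) ε Φ]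
      have hc : (PowerSeries.constantCoeff (R := A)).comp (PowerSeries.C (R := A)) = RingHom.id A := by
        ext a; simp
      have hv : (⇑(PowerSeries.constantCoeff (R := A))) ∘ ε = fun _ => (0 : A) :=
        funext fun i => hε0 i
      rw [hc, hv]
    have hesymm0 : ∀ k : ℕ, 0 < k →
        MvPolynomial.eval₂Hom (RingHom.id A) (fun _ : Fin N => (0 : A))
          (MvPolynomial.esymm (Fin N) A k) = 0 := by
      intro k hk
      rw [eval₂Hom_esymm, Finset.esymm_map_val]
      refine Finset.sum_eq_zero fun t ht => ?_
      rw [Finset.prod_const, zero_pow]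
      rw [(Finset.mem_powersetCard.mp ht).2]
      omega
    have h3 : MvPolynomial.eval₂ (RingHom.id A) (fun _ => (0 : A)) Φ
        = MvPolynomial.eval₂Hom (RingHom.id A) (fun _ : Fin N => (0 : A)) Q := by
      rw [← hΦ', MvPolynomial.aeval_def, MvPolynomial.algebraMap_eq,
        MvPolynomial.eval₂_comp_left
          (MvPolynomial.eval₂Hom (RingHom.id A) (fun _ : Fin N => (0 : A)))
          MvPolynomial.C _ Φ]
      have hc : ((MvPolynomial.eval₂Hom (RingHom.id A) (fun _ : Fin N => (0 : A))).comp
          (MvPolynomial.C (σ := Fin N) (R := A))) = RingHom.id A := by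
        ext a; simp
      have hv : (⇑(MvPolynomial.eval₂Hom (RingHom.id A) (fun _ : Fin N => (0 : A)))) ∘
          (fun i : Fin N => MvPolynomial.esymm (Fin N) A ((i : ℕ) + 1)) =
          fun _ => (0 : A) := by
        funext i
        simp only [Function.comp_apply]
        rw [hesymm0 _ (Nat.succ_pos _)]
      rw [hc, hv]
    have h4 : MvPolynomial.eval₂Hom (RingHom.id A) (fun _ : Fin N => (0 : A)) Q
        = (h.coeff 0) ^ N := by
      rw [hQ, map_prod]
      have : ∀ j : Fin N, MvPolynomial.eval₂Hom (RingHom.id A) (fun _ : Fin N => (0 : A))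
          (Polynomial.aeval (MvPolynomial.X j) h) = h.coeff 0 := by
        intro j
        rw [Polynomial.aeval_def, Polynomial.hom_eval₂]
        simp only [MvPolynomial.eval₂Hom_X']
        rw [Polynomial.eval₂_at_zero]
        simp [MvPolynomial.algebraMap_eq]
      simp only [this, Finset.prod_const, Finset.card_univ, Fintype.card_fin]
    rw [h1, h3, h4]

lemma carlitz_monic {Fq : Type} [Field Fq] [Fintype Fq]
    (ρ : Polynomial Fq → Polynomial (Polynomial Fq))
    (hρC : ∀ c : Fq, ρ (Polynomial.C c) = Polynomial.C (Polynomial.C c) * Polynomial.X)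
    (hρT : ρ Polynomial.X =
      Polynomial.C Polynomial.X * Polynomial.X + Polynomial.X ^ Fintype.card Fq)
    (hρadd : ∀ a b : Polynomial Fq, ρ (a + b) = ρ a + ρ b)
    (hρmul : ∀ a b : Polynomial Fq, ρ (a * b) = (ρ a).comp (ρ b))
    (π : Polynomial Fq) (hπmonic : π.Monic)
    (hπdeg : (ρ π).natDegree = Fintype.card Fq ^ π.natDegree) :
    (ρ π).Monic := by
  classical
  set q := Fintype.card Fq with hqdef
  have hq2 : 1 < q := Fintype.one_lt_card
  -- ρ 0 = 0
  have hρ0 : ρ 0 = 0 := by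
    have h := hρadd 0 0
    rw [add_zero] at h
    exact (left_eq_add.mp h)
  -- degree facts for ρ X
  have hdegCX : ((Polynomial.C Polynomial.X * Polynomial.X : Polynomial (Polynomial Fq))).degree
      < ((Polynomial.X : Polynomial (Polynomial Fq)) ^ q).degree := by
    rw [degree_X_pow, degree_mul, degree_C (Polynomial.X_ne_zero), degree_X, zero_add]
    exact_mod_cast hq2
  have hXmonic : (ρ Polynomial.X).Monic := by
    rw [hρT]
    exact (monic_X_pow q).add_of_right hdegCX
  have hXdeg : (ρ Polynomial.X).natDegree = q := by
    rw [hρT]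
    rw [natDegree_add_eq_right_of_natDegree_lt]
    · exact natDegree_X_pow q
    · rw [natDegree_X_pow]
      calc (Polynomial.C Polynomial.X * Polynomial.X : Polynomial (Polynomial Fq)).natDegree
          ≤ 1 := by
            apply natDegree_mul_le.trans
            simp
        _ < q := hq2
  -- ρ (X ^ i) is monic of degree q ^ i
  have hXpow : ∀ i : ℕ, (ρ (Polynomial.X ^ i)).Monic ∧
      (ρ (Polynomial.X ^ i)).natDegree = q ^ i := by
    intro i
    induction i with
    | zero =>
      have h1 : ρ ((Polynomial.X : Polynomial Fq) ^ 0) = Polynomial.X := by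
        rw [pow_zero, ← Polynomial.C_1, hρC]
        simp
      rw [h1]
      exact ⟨monic_X, by simp⟩
    | succ i ih =>
      have h1 : ρ ((Polynomial.X : Polynomial Fq) ^ (i + 1))
          = (ρ (Polynomial.X ^ i)).comp (ρ Polynomial.X) := by
        rw [pow_succ, hρmul]
      constructor
      · rw [h1]
        exact ih.1.comp hXmonic (by rw [hXdeg]; omega)
      · rw [h1, natDegree_comp, ih.2, hXdeg, pow_succ]
  -- additivity over finite sums
  have hρsum : ∀ (s : Finset ℕ) (F : ℕ → Polynomial Fq),
      ρ (∑ i ∈ s, F i) = ∑ i ∈ s, ρ (F i) := by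
    intro s F
    induction s using Finset.cons_induction with
    | empty => simpa using hρ0
    | cons a s ha ih => rw [Finset.sum_cons, hρadd, ih, Finset.sum_cons]
  -- decomposition of ρ π
  have hdecomp : ρ π = ∑ i ∈ Finset.range (π.natDegree + 1),
      Polynomial.C (Polynomial.C (π.coeff i)) * ρ (Polynomial.X ^ i) := by
    conv_lhs => rw [π.as_sum_range_C_mul_X_pow, hρsum]
    refine Finset.sum_congr rfl fun i _ => ?_
    rw [hρmul, hρC]
    simp [Polynomial.mul_comp]
  -- the top coefficient
  have hcoeff : (ρ π).coeff (q ^ π.natDegree) = 1 := by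
    rw [hdecomp, Polynomial.finset_sum_coeff, Finset.sum_range_succ]
    have hzero : ∀ i ∈ Finset.range π.natDegree,
        (Polynomial.C (Polynomial.C (π.coeff i)) * ρ (Polynomial.X ^ i)).coeff
          (q ^ π.natDegree) = 0 := by
      intro i hi
      apply Polynomial.coeff_eq_zero_of_natDegree_lt
      calc (Polynomial.C (Polynomial.C (π.coeff i)) * ρ (Polynomial.X ^ i)).natDegree
          ≤ (ρ (Polynomial.X ^ i)).natDegree := natDegree_C_mul_le _ _
        _ = q ^ i := (hXpow i).2
        _ < q ^ π.natDegree := Nat.pow_lt_pow_right hq2 (Finset.mem_range.mp hi)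
    rw [Finset.sum_eq_zero hzero, zero_add, hπmonic.coeff_natDegree]
    simp only [Polynomial.C_1, one_mul]
    have := (hXpow π.natDegree).1
    have h2 := (hXpow π.natDegree).2
    rw [← h2]
    exact this.coeff_natDegree
  rw [Monic, leadingCoeff, hπdeg, hcoeff]


/-- Main assembly lemma with clean binders. -/
lemma assemble {A L : Type*} [CommRing A] [Field L] (N : ℕ) (hN1 : 0 < N)
    (hchar : Even N → (1 + 1 : A) = 0)
    (toL : PowerSeries A →+* L) (β : Fin N → L)
    (Q : Polynomial A) (hrv0 : Q.coeff 0 = 1)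
    (hsplit : Polynomial.map toL
        (Polynomial.X ^ N - Polynomial.C PowerSeries.X * (Q.map (PowerSeries.C (R := A)))) =
      ∏ j : Fin N, (Polynomial.X - Polynomial.C (β j)))
    (f : Polynomial A) (n₀ : ℕ) (hlow : ∀ i < n₀, f.coeff i = 0) :
    ∃ g : PowerSeries A,
      toL g = ∏ j : Fin N, Polynomial.eval (β j) (f.map (toL.comp (PowerSeries.C (R := A)))) ∧
      (∀ n < n₀, PowerSeries.coeff (R := A) n g = 0) ∧
      PowerSeries.coeff (R := A) n₀ g = (f.coeff n₀) ^ N := by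
  classical
  set P : Polynomial (PowerSeries A) :=
    Polynomial.X ^ N - Polynomial.C PowerSeries.X * (Q.map (PowerSeries.C (R := A))) with hPdef
  have hPcoeff : ∀ k, k < N → P.coeff k
      = -(PowerSeries.X * PowerSeries.C (R := A) (Q.coeff k)) := by
    intro k hk
    rw [hPdef, Polynomial.coeff_sub, Polynomial.coeff_X_pow, if_neg hk.ne,
      Polynomial.coeff_C_mul, Polynomial.coeff_map, zero_sub]
  have hcoeff_prod : ∀ k : ℕ, k ≤ N →
      (∏ j : Fin N, (Polynomial.X - Polynomial.C (β j))).coeff (N - k)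
      = (-1) ^ k * (Finset.univ.val.map β).esymm k := by
    intro k hk
    have h1 : ∀ j : Fin N, Polynomial.X - Polynomial.C (β j)
        = Polynomial.X + Polynomial.C (-(β j)) := by
      intro j; rw [map_neg]; ring
    calc (∏ j : Fin N, (Polynomial.X - Polynomial.C (β j))).coeff (N - k)
        = ((Finset.univ.val.map
            (fun j : Fin N => Polynomial.X + Polynomial.C (-(β j)))).prod).coeff (N - k) := by
          simp_rw [h1]
          rw [Finset.prod_eq_multiset_prod]
      _ = (Finset.univ.val.map (fun j : Fin N => -(β j))).esymm
            (Multiset.card (Finset.univ.val (α := Fin N)) - (N - k)) := by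
          rw [Multiset.prod_X_add_C_coeff']
          simp
      _ = (-1) ^ k * (Finset.univ.val.map β).esymm k := by
          have hcard : Multiset.card (Finset.univ.val (α := Fin N)) = N := by simp
          rw [hcard, Nat.sub_sub_self hk]
          have hmm : (Finset.univ.val.map (fun j : Fin N => -(β j)))
              = Multiset.map Neg.neg (Finset.univ.val.map β) := by
            rw [Multiset.map_map]; rfl
          rw [hmm, Multiset.esymm_neg]
  have hesymm : ∀ k : ℕ, 1 ≤ k → k ≤ N →
      (Finset.univ.val.map β).esymm k
      = toL ((-1) ^ k * -(PowerSeries.X * PowerSeries.C (R := A) (Q.coeff (N - k)))) := by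
    intro k h1k hkN
    have hc := congrArg (fun p : Polynomial L => p.coeff (N - k)) hsplit
    rw [Polynomial.coeff_map] at hc
    rw [hPcoeff (N - k) (by omega), hcoeff_prod k hkN] at hc
    have hsq : ((-1 : L) ^ k) * ((-1 : L) ^ k) = 1 := by
      rw [← mul_pow, neg_mul_neg, one_mul, one_pow]
    calc (Finset.univ.val.map β).esymm k
        = ((-1 : L) ^ k * (-1 : L) ^ k) * (Finset.univ.val.map β).esymm k := by
          rw [hsq, one_mul]
      _ = (-1 : L) ^ k * ((-1 : L) ^ k * (Finset.univ.val.map β).esymm k) := by ring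
      _ = (-1 : L) ^ k * toL (-(PowerSeries.X * PowerSeries.C (R := A) (Q.coeff (N - k)))) := by
          rw [← hc]
      _ = toL ((-1) ^ k * -(PowerSeries.X * PowerSeries.C (R := A) (Q.coeff (N - k)))) := by
          simp
  set ε : Fin N → PowerSeries A := fun i =>
    (-1) ^ ((i : ℕ) + 1) *
      -(PowerSeries.X * PowerSeries.C (R := A) (Q.coeff (N - ((i : ℕ) + 1)))) with hεdef
  have hε0 : ∀ i, PowerSeries.constantCoeff (R := A) (ε i) = 0 := by
    intro i
    rw [hεdef]
    simp
  have hεβ : ∀ i : Fin N, toL (ε i) = (Finset.univ.val.map β).esymm ((i : ℕ) + 1) := by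
    intro i
    rw [hεdef]
    exact (hesymm ((i : ℕ) + 1) (by omega) (by have := i.2; omega)).symm
  have hprodβ : (∏ j : Fin N, β j) = toL PowerSeries.X := by
    have hc := congrArg (fun p : Polynomial L => p.eval 0) hsplit
    rw [Polynomial.eval_map, Polynomial.eval₂_at_zero,
      hPcoeff 0 hN1, hrv0, map_one, mul_one, Polynomial.eval_prod] at hc
    have hev : ∀ j : Fin N, Polynomial.eval (0 : L) (Polynomial.X - Polynomial.C (β j))
        = -(β j) := by intro j; simp
    simp_rw [hev] at hc
    have hc2 : toL (-PowerSeries.X) = (-1 : L) ^ N * ∏ j : Fin N, β j := by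
      rw [hc]
      rw [show (fun j : Fin N => -(β j)) = fun j => (-1 : L) * β j from funext fun j => by ring]
      rw [Finset.prod_mul_distrib, Finset.prod_const, Finset.card_univ, Fintype.card_fin]
    rcases Nat.even_or_odd N with hNe | hNo
    · have hneg : -PowerSeries.X = (PowerSeries.X : PowerSeries A) := by
        have h2 : (1 + 1 : PowerSeries A) = 0 := by
          rw [show (1 + 1 : PowerSeries A)
              = PowerSeries.C (R := A) (1 + 1) by rw [map_add, map_one],
            hchar hNe, map_zero]
        linear_combination (-(PowerSeries.X : PowerSeries A)) * h2
      rw [hneg, Even.neg_one_pow hNe, one_mul] at hc2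
      exact hc2.symm
    · rw [Odd.neg_one_pow hNo, map_neg, neg_one_mul] at hc2
      exact (neg_injective hc2).symm
  obtain ⟨h, hfh⟩ : (Polynomial.X : Polynomial A) ^ n₀ ∣ f :=
    Polynomial.X_pow_dvd_iff.mpr hlow
  have ha : h.coeff 0 = f.coeff n₀ := by
    have h2 := Polynomial.coeff_X_pow_mul h n₀ 0
    rw [zero_add] at h2
    rw [hfh, h2]
  obtain ⟨gh, hgh1, hgh2⟩ := core N toL β ε hε0 hεβ h
  refine ⟨PowerSeries.X ^ n₀ * gh, ?_, ?_, ?_⟩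
  · rw [map_mul, map_pow, hgh1, hfh]
    simp_rw [Polynomial.map_mul, Polynomial.map_pow, Polynomial.map_X, Polynomial.eval_mul,
      Polynomial.eval_pow, Polynomial.eval_X]
    rw [Finset.prod_mul_distrib, Finset.prod_pow, hprodβ]
  · intro n hn
    rw [PowerSeries.coeff_X_pow_mul', if_neg (by omega)]
  · rw [PowerSeries.coeff_X_pow_mul', if_pos le_rfl, Nat.sub_self,
      PowerSeries.coeff_zero_eq_constantCoeff, hgh2, ha]

end ProdRootsAux

/-- Same setup as the previous statement: `A = 𝔽_q[T]`, `ρ` the Carlitz module, `π` monic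
irreducible of degree `d`, `f_π` the reverse of `ρ_π`, `P(X) = X^(q^d) - u·f_π(X)` over
`A[[u]]`, and `L ⊇ Frac(A[[u]])` a field over which `P` splits with roots `β₁, …, β_{q^d}`.
Let `f ∈ A[X]` be nonzero with lowest-degree term `a_{n₀} X^{n₀}` (`a_{n₀} ≠ 0`).  Then
the element `∏ⱼ f(βⱼ)` of `A[[u]]` has coefficient of `uⁿ` equal to `0` for all `n < n₀`,
and its coefficient of `u^{n₀}` equals `a_{n₀}^(q^d)`. -/
theorem prod_roots_leading_coeff
    (Fq : Type) [Field Fq] [Fintype Fq]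
    (ρ : Polynomial Fq → Polynomial (Polynomial Fq))
    (hρC : ∀ c : Fq, ρ (Polynomial.C c) = Polynomial.C (Polynomial.C c) * Polynomial.X)
    (hρT : ρ Polynomial.X =
      Polynomial.C Polynomial.X * Polynomial.X + Polynomial.X ^ Fintype.card Fq)
    (hρadd : ∀ a b : Polynomial Fq, ρ (a + b) = ρ a + ρ b)
    (hρmul : ∀ a b : Polynomial Fq, ρ (a * b) = (ρ a).comp (ρ b))
    (π : Polynomial Fq) (hπmonic : π.Monic) (hπirr : Irreducible π)
    (hπdeg : (ρ π).natDegree = Fintype.card Fq ^ π.natDegree)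
    (L : Type) [Field L]
    [Algebra (FractionRing (PowerSeries (Polynomial Fq))) L]
    (toL : PowerSeries (Polynomial Fq) →+* L)
    (htoL : toL = (algebraMap (FractionRing (PowerSeries (Polynomial Fq))) L).comp
      (algebraMap (PowerSeries (Polynomial Fq))
        (FractionRing (PowerSeries (Polynomial Fq)))))
    (β : Fin (Fintype.card Fq ^ π.natDegree) → L)
    (hsplit :
      Polynomial.map toL
        (Polynomial.X ^ (Fintype.card Fq ^ π.natDegree) -
          Polynomial.C PowerSeries.X *
            ((ρ π).reverse.map (PowerSeries.C (R := Polynomial Fq)))) =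
      ∏ j : Fin (Fintype.card Fq ^ π.natDegree),
        (Polynomial.X - Polynomial.C (β j)))
    (f : Polynomial (Polynomial Fq)) (n₀ : ℕ)
    (hlow : ∀ i < n₀, f.coeff i = 0) (hn₀ : f.coeff n₀ ≠ 0) :
    ∃ g : PowerSeries (Polynomial Fq),
      toL g = ∏ j : Fin (Fintype.card Fq ^ π.natDegree),
        Polynomial.eval (β j) (f.map (toL.comp (PowerSeries.C (R := Polynomial Fq)))) ∧
      (∀ n < n₀, PowerSeries.coeff (R := Polynomial Fq) n g = 0) ∧
      PowerSeries.coeff (R := Polynomial Fq) n₀ g =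
        (f.coeff n₀) ^ (Fintype.card Fq ^ π.natDegree) := by
  have hq2 : 1 < Fintype.card Fq := Fintype.one_lt_card
  have hmonic : (ρ π).Monic :=
    ProdRootsAux.carlitz_monic ρ hρC hρT hρadd hρmul π hπmonic hπdeg
  have hchar : Even (Fintype.card Fq ^ π.natDegree) → (1 + 1 : Polynomial Fq) = 0 := by
    intro hNe
    obtain ⟨hqe, -⟩ := Nat.even_pow.mp hNe
    have hcharFq : ringChar Fq = 2 :=
      FiniteField.even_card_iff_char_two.mpr (Nat.even_iff.mp hqe)
    haveI : CharP Fq 2 := by rw [← hcharFq]; exact ringChar.charP Fq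
    have h2 : ((2 : ℕ) : Fq) = 0 := CharP.cast_eq_zero Fq 2
    have h3 : (1 + 1 : Fq) = 0 := by push_cast at h2; linear_combination h2
    rw [← Polynomial.C_1, ← Polynomial.C_add, h3, Polynomial.C_0]
  have hrv0 : (ρ π).reverse.coeff 0 = 1 := by
    rw [Polynomial.coeff_zero_reverse]; exact hmonic
  exact ProdRootsAux.assemble (Fintype.card Fq ^ π.natDegree)
    (pow_pos (by omega) _) hchar toL β (ρ π).reverse hrv0 hsplit f n₀ hlow
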